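/- arXiv:2003.00496 — 4 statements merged into one kernel-verified Lean document; each statement's English description precedes it below -/
import Mathlib

section
/- Let I be an ideal and P a prime ideal in a polynomial ring over a field. Then P is an associated prime of I if and only if P contains the double ideal quotient (I : (I : P)). -/
open Ideal

/-- **Criterion for prime divisors via double ideal quotient.**
In a polynomial ring over a field, a prime `P` is an associated prime of a proper ideal `I`
iff `P ⊇ (I : (I : P))`. -/
theorem associated_iff_le_doubleIdealQuotient {K : Type*} [Field K] {n : ℕ}
    (I P : Ideal (MvPolynomial (Fin n) K)) (hI : I ≠ ⊤) (hP : P.IsPrime) :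
    P ∈ associatedPrimes (MvPolynomial (Fin n) K) (MvPolynomial (Fin n) K ⧸ I) ↔
      I.colon (I.colon P) ≤ P := by
  classical
  set R := MvPolynomial (Fin n) K
  have mk_smul : ∀ (a b : R), a • (Ideal.Quotient.mk I) b = (Ideal.Quotient.mk I) (a * b) :=
    fun a b => rfl
  constructor
  · intro hmem
    obtain ⟨hPrime, x, hx⟩ := isAssociatedPrime_iff.mp hmem
    rw [Submodule.bot_colon'] at hx
    obtain ⟨f, rfl⟩ := Ideal.Quotient.mk_surjective x
    have hf : f ∈ I.colon P := by
      rw [Submodule.mem_colon]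
      intro p hp
      have hp' : p ∈ (Submodule.span R {(Ideal.Quotient.mk I) f}).annihilator := hx ▸ hp
      rw [Submodule.mem_annihilator_span_singleton, mk_smul,
        Ideal.Quotient.eq_zero_iff_mem] at hp'
      simpa [smul_eq_mul, mul_comm] using hp'
    intro r hr
    rw [Submodule.mem_colon] at hr
    have hrf : r * f ∈ I := by simpa [smul_eq_mul] using hr f hf
    rw [hx, Submodule.mem_annihilator_span_singleton, mk_smul, Ideal.Quotient.eq_zero_iff_mem]
    exact hrf
  · intro h
    -- First, find `g ∈ (I : P)` with `(I : g) ≤ P`.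
    have key : ∃ g ∈ I.colon P, I.colon (Ideal.span {g}) ≤ P := by
      by_contra hcon
      push_neg at hcon
      have hch : ∀ g : R, ∃ r : R, g ∈ I.colon P → (r ∉ P ∧ r * g ∈ I) := by
        intro g
        by_cases hg : g ∈ I.colon P
        · obtain ⟨r, hr1, hr2⟩ := Set.not_subset.mp (fun hs => (hcon g hg) hs)
          exact ⟨r, fun _ => ⟨hr2, Ideal.mem_colon_span_singleton.mp hr1⟩⟩
        · exact ⟨1, fun hg' => absurd hg' hg⟩
      choose r hr using hch
      obtain ⟨s, hs⟩ : (I.colon P).FG := IsNoetherian.noetherian _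
      set t : R := ∏ g ∈ s, r g with ht
      have htP : t ∉ P := by
        intro htp
        obtain ⟨g, hgs, hgP⟩ := (Ideal.IsPrime.prod_mem_iff (hp := hP)).mp htp
        exact (hr g (hs ▸ Ideal.subset_span hgs)).1 hgP
      have htcolon : t ∈ I.colon (I.colon P) := by
        rw [Submodule.mem_colon]
        intro p hp
        rw [← hs] at hp
        rw [smul_eq_mul]
        have hsp : Ideal.span (s : Set R) ≤ I.colon (Ideal.span {t}) := by
          rw [Ideal.span_le]
          intro g hgs
          have hgs' : g ∈ s := hgs
          rw [SetLike.mem_coe, Ideal.mem_colon_span_singleton]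
          have hgI : r g * g ∈ I := (hr g (hs ▸ Ideal.subset_span hgs)).2
          have hteq : t = (∏ x ∈ s.erase g, r x) * r g := by
            rw [ht, ← Finset.prod_erase_mul s r hgs']
          have : g * t = (∏ x ∈ s.erase g, r x) * (r g * g) := by rw [hteq]; ring
          rw [this]
          exact Ideal.mul_mem_left _ _ hgI
        have := hsp hp
        rw [Ideal.mem_colon_span_singleton] at this
        rwa [mul_comm] at this
      exact htP (h htcolon)
    obtain ⟨g, hgJ, hgle⟩ := key
    refine isAssociatedPrime_iff.mpr ⟨hP, Ideal.Quotient.mk I g, ?_⟩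
    rw [Submodule.bot_colon']
    ext x
    rw [Submodule.mem_annihilator_span_singleton, mk_smul, Ideal.Quotient.eq_zero_iff_mem]
    constructor
    · intro hx
      have := Submodule.mem_colon.mp hgJ x hx
      rw [smul_eq_mul, mul_comm] at this
      exact this
    · intro hx
      exact hgle (Ideal.mem_colon_span_singleton.mpr hx)
end

section
/- Let I be an ideal and J a proper radical ideal in a Noetherian commutative ring. If every associated prime of J is an associated prime of I, then J contains (I : (I : J)). -/
open Ideal

/-- If every associated prime of a proper radical ideal `J` is an associated prime of `I`,
then `J ⊇ (I : (I : J))`. -/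
theorem le_of_associatedPrimes_subset {R : Type*} [CommRing R] [IsNoetherianRing R]
    (I J : Ideal R) (hJtop : J ≠ ⊤) (hJrad : J.radical = J)
    (h : associatedPrimes R (R ⧸ J) ⊆ associatedPrimes R (R ⧸ I)) :
    I.colon (I.colon J) ≤ J := by
  have mk_smul : ∀ (K : Ideal R) (a b : R),
      a • (Ideal.Quotient.mk K b) = Ideal.Quotient.mk K (a * b) := by
    intro K a b
    rfl
  intro f hf
  by_contra hfJ
  set fb : R ⧸ J := Ideal.Quotient.mk J f with hfb
  have hfb0 : fb ≠ 0 := by simpa [hfb, Ideal.Quotient.eq_zero_iff_mem] using hfJ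
  set M : Submodule R (R ⧸ J) := Submodule.span R {fb} with hM
  obtain ⟨P, hPM, -⟩ := exists_le_isAssociatedPrime_of_isNoetherianRing R
    (⟨fb, Submodule.mem_span_singleton_self fb⟩ : M)
    (by simpa [Subtype.ext_iff] using hfb0)
  have hPJ : IsAssociatedPrime P (R ⧸ J) :=
    hPM.map_of_injective M.subtype Subtype.coe_injective
  have hPI : IsAssociatedPrime P (R ⧸ I) := h hPJ
  obtain ⟨hPprime, z, hz⟩ := isAssociatedPrime_iff.mp hPI
  obtain ⟨x, rfl⟩ := Ideal.Quotient.mk_surjective z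
  -- J ≤ P
  have hJP : J ≤ P := by
    obtain ⟨-, y, hy⟩ := isAssociatedPrime_iff.mp hPJ
    intro a ha
    rw [hy, Submodule.mem_colon_singleton, Submodule.mem_bot]
    obtain ⟨b, rfl⟩ := Ideal.Quotient.mk_surjective y
    rw [mk_smul, Ideal.Quotient.eq_zero_iff_mem]
    exact J.mul_mem_right b ha
  -- x ∈ I.colon J
  have hxIJ : x ∈ I.colon J := by
    rw [Submodule.mem_colon]
    intro a ha
    have hax : a ∈ P := hJP ha
    rw [hz, Submodule.mem_colon_singleton, Submodule.mem_bot, mk_smul,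
      Ideal.Quotient.eq_zero_iff_mem] at hax
    simpa [smul_eq_mul, mul_comm] using hax
  -- f ∈ P
  have hfP : f ∈ P := by
    rw [hz, Submodule.mem_colon_singleton, Submodule.mem_bot, mk_smul,
      Ideal.Quotient.eq_zero_iff_mem]
    have := Submodule.mem_colon.mp hf x hxIJ
    simpa using this
  -- derive contradiction
  obtain ⟨-, y, hy⟩ := isAssociatedPrime_iff.mp hPM
  have hy0 : y ≠ 0 := by
    rintro rfl
    exact hPprime.ne_top (by
      rw [hy, eq_top_iff]; intro r _; rw [Submodule.mem_colon_singleton, Submodule.mem_bot, smul_zero])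
  have hfy : f • y = 0 := by
    have : f ∈ (⊥ : Submodule R M).colon {y} := hy ▸ hfP
    rwa [Submodule.mem_colon_singleton, Submodule.mem_bot] at this
  obtain ⟨c, hc⟩ := Submodule.mem_span_singleton.mp y.2
  have hval : f • (y : R ⧸ J) = 0 := by
    have := congrArg (Subtype.val) hfy
    simpa using this
  rw [← hc, hfb, mk_smul, mk_smul, Ideal.Quotient.eq_zero_iff_mem] at hval
  -- hval : f * (c * f) ∈ J
  have hcf : c * f ∈ J := by
    rw [← hJrad]
    refine ⟨2, ?_⟩
    have h2 : (c * f) ^ 2 = c * (f * (c * f)) := by ring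
    rw [h2]
    exact J.mul_mem_left c hval
  have hyval : (y : R ⧸ J) = 0 := by
    rw [← hc, hfb, mk_smul, Ideal.Quotient.eq_zero_iff_mem]
    exact hcf
  exact hy0 (Subtype.ext (by simpa using hyval))
end

section
/- Let I be an ideal and J a proper radical ideal in a Noetherian commutative ring. Then Ass(J) ⊆ Ass(I) if and only if J ⊇ (I : (I : J)). -/
open Ideal

private lemma ann_span_mk {R : Type*} [CommRing R] (J : Ideal R) (x a : R) :
    a ∈ (⊥ : Submodule R (R ⧸ J)).colon {Ideal.Quotient.mk J x} ↔ a * x ∈ J := by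
  rw [Submodule.mem_colon_singleton, Submodule.mem_bot,
    show a • (Ideal.Quotient.mk J x) = Ideal.Quotient.mk J (a * x) from rfl,
    Ideal.Quotient.eq_zero_iff_mem]

/-- If `J` is radical and `x ∉ J`, there is an associated prime of `R ⧸ J` avoiding `x`. -/
private lemma exists_assoc_avoiding {R : Type*} [CommRing R] [IsNoetherianRing R]
    (J : Ideal R) (hJrad : J.radical = J) {x : R} (hx : x ∉ J) :
    ∃ P ∈ associatedPrimes R (R ⧸ J), x ∉ P := by
  set N : Submodule R (R ⧸ J) := Submodule.span R {Ideal.Quotient.mk J x} with hN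
  have hxne : Ideal.Quotient.mk J x ≠ 0 := by
    rwa [Ne, Ideal.Quotient.eq_zero_iff_mem]
  have : Nontrivial N := by
    refine ⟨⟨Ideal.Quotient.mk J x, Submodule.mem_span_singleton_self _⟩, 0, ?_⟩
    simp [Subtype.ext_iff, hxne]
  obtain ⟨P, hP⟩ := associatedPrimes.nonempty R N
  refine ⟨P, hP.map_of_injective N.subtype Subtype.val_injective, ?_⟩
  obtain ⟨hPp, n, hn⟩ := isAssociatedPrime_iff.mp hP
  obtain ⟨c, hc⟩ := Submodule.mem_span_singleton.mp n.2
  intro hxP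
  rw [hn, Submodule.mem_colon_singleton, Submodule.mem_bot] at hxP
  have hn1 : (n : R ⧸ J) = Ideal.Quotient.mk J (c * x) := by
    rw [← hc]; rfl
  have hx2 : x • (n : R ⧸ J) = 0 := by
    have := congrArg (Submodule.subtype N) hxP
    simpa using this
  rw [hn1, show x • Ideal.Quotient.mk J (c * x) = Ideal.Quotient.mk J (x * (c * x)) from rfl,
    Ideal.Quotient.eq_zero_iff_mem] at hx2
  have hcx : c * x ∈ J := by
    rw [← hJrad]
    refine ⟨2, ?_⟩
    have h2 : (c * x) ^ 2 = c * (x * (c * x)) := by ring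
    rw [h2]
    exact J.mul_mem_left _ hx2
  have hn0 : n = 0 := Subtype.ext (by
    show (n : R ⧸ J) = 0
    rw [hn1, Ideal.Quotient.eq_zero_iff_mem]; exact hcx)
  apply hPp.ne_top
  rw [hn, hn0]
  ext a; simp [Submodule.mem_colon_singleton]

/-- For a proper radical ideal `J` in a Noetherian ring, `Ass(J) ⊆ Ass(I)` iff
`J ⊇ (I : (I : J))`. -/
theorem associatedPrimes_subset_iff_doubleQuotient_le {R : Type*} [CommRing R]
    [IsNoetherianRing R] (I J : Ideal R) (hJtop : J ≠ ⊤) (hJrad : J.radical = J) :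
    associatedPrimes R (R ⧸ J) ⊆ associatedPrimes R (R ⧸ I) ↔
      I.colon (I.colon J) ≤ J := by
  constructor
  · intro h x hx
    by_contra hxJ
    obtain ⟨P, hP, hxP⟩ := exists_assoc_avoiding J hJrad hxJ
    have hJP : J ≤ P := by
      obtain ⟨hPp, z, hz⟩ := isAssociatedPrime_iff.mp hP
      intro a ha
      obtain ⟨z, rfl⟩ := Ideal.Quotient.mk_surjective z
      rw [hz, ann_span_mk]
      exact J.mul_mem_right _ ha
    obtain ⟨hPp, y, hy⟩ := isAssociatedPrime_iff.mp (h hP)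
    obtain ⟨y, rfl⟩ := Ideal.Quotient.mk_surjective y
    have hyK : y ∈ I.colon J := by
      rw [Submodule.mem_colon]
      intro p hp
      have : p * y ∈ I := by rw [← ann_span_mk I y p, ← hy]; exact hJP hp
      rwa [smul_eq_mul, mul_comm]
    apply hxP
    rw [hy, ann_span_mk]
    have := Submodule.mem_colon.mp hx y hyK
    rwa [smul_eq_mul] at this
  · intro h P hP
    obtain ⟨hPp, z, hz⟩ := isAssociatedPrime_iff.mp hP
    obtain ⟨x, rfl⟩ := Ideal.Quotient.mk_surjective z
    have hPmem : ∀ a : R, a ∈ P ↔ a * x ∈ J := fun a => by rw [hz, ann_span_mk]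
    have hJeq : J = I.colon (I.colon J) := by
      refine le_antisymm (fun j hj => ?_) h
      rw [Submodule.mem_colon]
      intro p hp
      rw [smul_eq_mul, mul_comm]
      exact Submodule.mem_colon.mp hp j hj
    obtain ⟨s, hs⟩ : (I.colon J).FG := IsNoetherian.noetherian _
    have key : ∃ k ∈ s, ∀ a : R, a ∈ P ↔ a * (x * k) ∈ I := by
      by_contra hcon
      push_neg at hcon
      have hPQk : ∀ k ∈ s, ∀ a ∈ P, a * (x * k) ∈ I := by
        intro k hk a ha
        have haxJ : a * x ∈ J := (hPmem a).mp ha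
        rw [hJeq, Submodule.mem_colon] at haxJ
        have := haxJ k (hs ▸ Submodule.subset_span hk)
        rwa [smul_eq_mul, mul_assoc] at this
      have hchoice : ∀ k ∈ s, ∃ a : R, a * (x * k) ∈ I ∧ a ∉ P := by
        intro k hk
        obtain ⟨a, ha⟩ := hcon k hk
        rcases ha with ⟨haP, haI⟩ | ⟨haP, haI⟩
        · exact absurd (hPQk k hk a haP) haI
        · exact ⟨a, haI, haP⟩
      choose! f hf1 hf2 using hchoice
      set t : R := ∏ k ∈ s, f k with ht
      have htI : ∀ k ∈ s, t * (x * k) ∈ I := by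
        intro k hk
        obtain ⟨c, hc⟩ := Finset.dvd_prod_of_mem f hk
        rw [← ht] at hc
        rw [hc, mul_comm (f k) c, mul_assoc]
        exact I.mul_mem_left _ (hf1 k hk)
      have htP : t ∈ P := by
        rw [hPmem, hJeq, Submodule.mem_colon]
        intro p hp
        rw [← hs] at hp
        have hsub : Ideal.span (s : Set R) ≤ I.colon (Ideal.span {t * x}) := by
          rw [Ideal.span_le]
          intro k hk
          rw [SetLike.mem_coe, Ideal.mem_colon_span_singleton, mul_comm k (t * x), mul_assoc]
          exact htI k hk
        have := Ideal.mem_colon_span_singleton.mp (hsub hp)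
        rwa [smul_eq_mul, mul_comm]
      obtain ⟨k, hk, hfk⟩ := (Ideal.IsPrime.prod_mem_iff (hp := hPp)).mp htP
      exact hf2 k hk hfk
    obtain ⟨k, hk, hPk⟩ := key
    refine isAssociatedPrime_iff.mpr ⟨hPp, Ideal.Quotient.mk I (x * k), ?_⟩
    ext a
    rw [ann_span_mk]
    exact hPk a
end

section
/- Let I be an ideal and P an associated prime of I in a Noetherian ring. Then the double ideal quotient satisfies (I : (I : P)) = P. -/
open Ideal

/-- For an associated prime `P` of `I` in a Noetherian ring, the double ideal quotient
satisfies `(I : (I : P)) = P`. -/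
theorem doubleIdealQuotient_eq_of_associated {R : Type*} [CommRing R] [IsNoetherianRing R]
    (I P : Ideal R) (hP : P ∈ associatedPrimes R (R ⧸ I)) :
    I.colon (I.colon P) = P := by
  obtain ⟨hprime, x, hx⟩ := isAssociatedPrime_iff.mp hP
  obtain ⟨x, rfl⟩ := Ideal.Quotient.mk_surjective x
  have hxP : ∀ p, p ∈ P ↔ p * x ∈ I := by
    intro p
    rw [hx, Submodule.mem_colon_singleton, Submodule.mem_bot]
    constructor
    · intro h
      have : (Ideal.Quotient.mk I) (p * x) = 0 := h
      rwa [Ideal.Quotient.eq_zero_iff_mem] at this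
    · intro h
      show (Ideal.Quotient.mk I) (p * x) = 0
      rwa [Ideal.Quotient.eq_zero_iff_mem]
  apply le_antisymm
  · intro r hr
    have hxcolon : x ∈ I.colon P := by
      rw [Submodule.mem_colon]
      intro p hp
      rw [smul_eq_mul, mul_comm]
      exact (hxP p).mp hp
    have := Submodule.mem_colon.mp hr x hxcolon
    rw [smul_eq_mul, ← hxP] at this
    exact this
  · intro p hp
    rw [Submodule.mem_colon]
    intro y hy
    rw [smul_eq_mul, mul_comm]
    exact Submodule.mem_colon.mp hy p hp
end
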